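/- Let X be a nonempty closed L-pseudo-Lipschitz subset of the pseudo-Euclidean space ℝ_{(l,p)} with L < 1. Then the multifunction m is locally bounded (for every a ∈ ℝ^n there are a neighbourhood U of a and R > 0 with m(x) contained in the Euclidean ball of radius R for all x ∈ U) and upper semicontinuous: whenever x_ν → a and y_ν ∈ m(x_ν) with y_ν → y, one has y ∈ m(a); moreover every point of m(a) is such a limit, i.e. limsup_{x→a} m(x) = m(a). -/

import Mathlib

open Filter Topology Set

noncomputable section

/-- The pseudo-Euclidean space `ℝ_{(l,p)}`: `ℝ^(l+p)` with the Euclidean topology. -/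
abbrev PE (l p : ℕ) := EuclideanSpace ℝ (Fin (l + p))

/-- The quadratic form `Q(x) = ‖x‖_l² − ‖x‖_p²`. -/
def Q (l p : ℕ) (x : PE l p) : ℝ :=
  ∑ i : Fin (l + p), if (i : ℕ) < l then (x i) ^ 2 else -((x i) ^ 2)

/-- The pseudo-scalar product `⟪x,y⟫ = Σ_{i<l} x_i y_i − Σ_{i≥l} x_i y_i`. -/
def pseudoInner (l p : ℕ) (x y : PE l p) : ℝ :=
  ∑ i : Fin (l + p), if (i : ℕ) < l then x i * y i else -(x i * y i)

/-- `‖x‖_l`: the Euclidean norm of the first `l` coordinates. -/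
def normL (l p : ℕ) (x : PE l p) : ℝ :=
  Real.sqrt (∑ i : Fin (l + p), if (i : ℕ) < l then (x i) ^ 2 else 0)

/-- `‖x‖_p`: the Euclidean norm of the last `p` coordinates. -/
def normP (l p : ℕ) (x : PE l p) : ℝ :=
  Real.sqrt (∑ i : Fin (l + p), if (i : ℕ) < l then 0 else (x i) ^ 2)

/-- `X` is acausal: `Q(x−y) > 0` for all distinct `x, y ∈ X`. -/
def Acausal (l p : ℕ) (X : Set (PE l p)) : Prop :=
  ∀ x ∈ X, ∀ y ∈ X, x ≠ y → 0 < Q l p (x - y)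

/-- `X` is `L`-pseudo-Lipschitz: `L‖x−y‖_l ≥ ‖x−y‖_p` for all `x, y ∈ X`. -/
def PseudoLipschitz (l p : ℕ) (L : ℝ) (X : Set (PE l p)) : Prop :=
  ∀ x ∈ X, ∀ y ∈ X, normP l p (x - y) ≤ L * normL l p (x - y)

/-- The squared-distance function `ρ(a,X) = inf {Q(x−a) : x ∈ X}`. -/
def rho (l p : ℕ) (X : Set (PE l p)) (a : PE l p) : ℝ :=
  sInf ((fun x => Q l p (x - a)) '' X)

/-- The set of closest points `m(a) = {x ∈ X : Q(x−a) = ρ(a,X)}`, via its equivalent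
description `m(a) = {x ∈ X : ∀ b ∈ X, Q(x−a) ≤ Q(b−a)}`. -/
def mm (l p : ℕ) (X : Set (PE l p)) (a : PE l p) : Set (PE l p) :=
  {x ∈ X | ∀ b ∈ X, Q l p (x - a) ≤ Q l p (b - a)}

/-- The medial axis `M_X`: points with at least two closest points in `X`. -/
def medialAxis (l p : ℕ) (X : Set (PE l p)) : Set (PE l p) :=
  {a | (mm l p X a).Nontrivial}

/-- The vacant axis `W_X`: points with no closest point in `X`. -/
def vacantAxis (l p : ℕ) (X : Set (PE l p)) : Set (PE l p) :=
  {a | mm l p X a = ∅}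

/-- The normal set `N(a) = {x : a ∈ m(x)}`. -/
def NN (l p : ℕ) (X : Set (PE l p)) (a : PE l p) : Set (PE l p) :=
  {x | a ∈ mm l p X x}

/-- The strict normal set `N'(a) = {x : m(x) = {a}}`. -/
def NN' (l p : ℕ) (X : Set (PE l p)) (a : PE l p) : Set (PE l p) :=
  {x | mm l p X x = {a}}


section Aux
variable {l p : ℕ}

def glf (l p : ℕ) (x : PE l p) : PE l p := WithLp.toLp 2 (fun i => if (i:ℕ) < l then x i else 0)
def gpf (l p : ℕ) (x : PE l p) : PE l p := WithLp.toLp 2 (fun i => if (i:ℕ) < l then 0 else x i)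

lemma glf_add (x y : PE l p) : glf l p (x + y) = glf l p x + glf l p y := by
  ext i; by_cases h : (i:ℕ) < l <;> simp [glf, h, PiLp.add_apply]

lemma gpf_add (x y : PE l p) : gpf l p (x + y) = gpf l p x + gpf l p y := by
  ext i; by_cases h : (i:ℕ) < l <;> simp [gpf, h, PiLp.add_apply]

lemma norm_glf (x : PE l p) : ‖glf l p x‖ = normL l p x := by
  rw [EuclideanSpace.norm_eq, normL]
  congr 1
  refine Finset.sum_congr rfl fun i _ => ?_
  by_cases h : (i:ℕ) < l <;> simp [glf, h, sq_abs]

lemma norm_gpf (x : PE l p) : ‖gpf l p x‖ = normP l p x := by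
  rw [EuclideanSpace.norm_eq, normP]
  congr 1
  refine Finset.sum_congr rfl fun i _ => ?_
  by_cases h : (i:ℕ) < l <;> simp [gpf, h, sq_abs]

lemma normL_nonneg (x : PE l p) : 0 ≤ normL l p x := Real.sqrt_nonneg _
lemma normP_nonneg (x : PE l p) : 0 ≤ normP l p x := Real.sqrt_nonneg _

lemma normL_add_le (x y : PE l p) : normL l p (x + y) ≤ normL l p x + normL l p y := by
  rw [← norm_glf, ← norm_glf, ← norm_glf, glf_add]; exact norm_add_le _ _

lemma normP_add_le (x y : PE l p) : normP l p (x + y) ≤ normP l p x + normP l p y := by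
  rw [← norm_gpf, ← norm_gpf, ← norm_gpf, gpf_add]; exact norm_add_le _ _

lemma sq_normL (x : PE l p) :
    normL l p x ^ 2 = ∑ i : Fin (l + p), if (i:ℕ) < l then (x i)^2 else 0 := by
  rw [normL, Real.sq_sqrt]
  exact Finset.sum_nonneg fun i _ => by split <;> positivity

lemma sq_normP (x : PE l p) :
    normP l p x ^ 2 = ∑ i : Fin (l + p), if (i:ℕ) < l then 0 else (x i)^2 := by
  rw [normP, Real.sq_sqrt]
  exact Finset.sum_nonneg fun i _ => by split <;> positivity

lemma Q_eq (x : PE l p) : Q l p x = normL l p x ^ 2 - normP l p x ^ 2 := by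
  rw [sq_normL, sq_normP, Q, ← Finset.sum_sub_distrib]
  refine Finset.sum_congr rfl fun i _ => ?_
  by_cases h : (i:ℕ) < l <;> simp [h]

lemma norm_sq_eq (x : PE l p) : ‖x‖ ^ 2 = normL l p x ^ 2 + normP l p x ^ 2 := by
  rw [sq_normL, sq_normP, EuclideanSpace.norm_eq, Real.sq_sqrt (by positivity),
    ← Finset.sum_add_distrib]
  refine Finset.sum_congr rfl fun i _ => ?_
  by_cases h : (i:ℕ) < l <;> simp [h, sq_abs]

lemma normL_le_norm (x : PE l p) : normL l p x ≤ ‖x‖ := by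
  have h := norm_sq_eq x
  nlinarith [normL_nonneg x, normP_nonneg x, norm_nonneg x, sq_nonneg (normP l p x)]

lemma normP_le_norm (x : PE l p) : normP l p x ≤ ‖x‖ := by
  have h := norm_sq_eq x
  nlinarith [normL_nonneg x, normP_nonneg x, norm_nonneg x]

lemma norm_le_normL_add_normP (x : PE l p) : ‖x‖ ≤ normL l p x + normP l p x := by
  have h := norm_sq_eq x
  nlinarith [normL_nonneg x, normP_nonneg x, norm_nonneg x,
    mul_nonneg (normL_nonneg x) (normP_nonneg x)]

lemma continuous_Q : Continuous (Q l p) := by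
  unfold Q
  refine continuous_finset_sum _ fun i _ => ?_
  have hc : Continuous fun x : PE l p => x i := (EuclideanSpace.proj (𝕜 := ℝ) i).continuous
  by_cases h : (i:ℕ) < l <;> simp only [h, if_true, if_false] <;> fun_prop

end Aux

set_option maxHeartbeats 1000000 in
/-- For nonempty closed `L`-pseudo-Lipschitz `X` with `L < 1`, the multifunction
`m` is locally bounded and upper semicontinuous, with `limsup_{x→a} m(x) = m(a)`. -/
theorem m_locallyBounded_usc (l p : ℕ) (hl : 1 ≤ l) (L : ℝ) (hL : L < 1)
    (X : Set (PE l p)) (hne : X.Nonempty) (hX : IsClosed X)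
    (hlip : PseudoLipschitz l p L X) :
    (∀ a : PE l p, ∃ U ∈ 𝓝 a, ∃ R > (0:ℝ), ∀ x ∈ U, mm l p X x ⊆ Metric.ball (0 : PE l p) R) ∧
    (∀ (a : PE l p) (x : ℕ → PE l p) (y : ℕ → PE l p) (y₀ : PE l p),
      Tendsto x atTop (𝓝 a) → (∀ ν, y ν ∈ mm l p X (x ν)) → Tendsto y atTop (𝓝 y₀) →
      y₀ ∈ mm l p X a) ∧
    (∀ (a : PE l p), ∀ y₀ ∈ mm l p X a, ∃ (x : ℕ → PE l p) (y : ℕ → PE l p),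
      Tendsto x atTop (𝓝 a) ∧ (∀ ν, y ν ∈ mm l p X (x ν)) ∧ Tendsto y atTop (𝓝 y₀)) := by
  obtain ⟨b, hb⟩ := hne
  set L' : ℝ := max L 0 with hL'def
  have hL'0 : 0 ≤ L' := le_max_right _ _
  have hL'1 : L' < 1 := max_lt hL one_pos
  have hlip' : ∀ u ∈ X, ∀ v ∈ X, normP l p (u - v) ≤ L' * normL l p (u - v) := by
    intro u hu v hv
    exact (hlip u hu v hv).trans
      (mul_le_mul_of_nonneg_right (le_max_left _ _) (normL_nonneg _))
  refine ⟨?_, ?_, ?_⟩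
  · -- local boundedness
    intro a
    set K : ℝ := ‖b - a‖ + 1 with hKdef
    have hK0 : 0 < K := by positivity
    set D : ℝ := 2 * K with hDdef
    set C : ℝ := K ^ 2 with hCdef
    set T : ℝ := max 1 ((C + D ^ 2 + 2 * D) / (1 - L' ^ 2)) with hTdef
    have hT1 : 1 ≤ T := le_max_left _ _
    refine ⟨Metric.ball a 1, Metric.ball_mem_nhds a one_pos,
      2 * T + D + ‖a‖ + 2, by positivity, ?_⟩
    intro x hx y hy
    obtain ⟨hyX, hymin⟩ := hy
    have hxa : ‖x - a‖ < 1 := by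
      rw [← dist_eq_norm]; exact Metric.mem_ball.mp hx
    have hbx : ‖b - x‖ ≤ K := by
      have h1 : ‖b - x‖ ≤ ‖b - a‖ + ‖a - x‖ := norm_sub_le_norm_sub_add_norm_sub b a x
      have h2 : ‖a - x‖ ≤ 1 := by rw [norm_sub_rev]; exact hxa.le
      simp only [hKdef]; linarith
    set t : ℝ := normL l p (y - x) with htdef
    set s : ℝ := normP l p (y - x) with hsdef
    have ht0 : 0 ≤ t := normL_nonneg _
    have hs0 : 0 ≤ s := normP_nonneg _
    have hQbx : Q l p (b - x) ≤ C := by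
      rw [Q_eq]
      have h1 := normL_le_norm (l := l) (p := p) (b - x)
      have h2 := normP_nonneg (l := l) (p := p) (b - x)
      have h3 := normL_nonneg (l := l) (p := p) (b - x)
      have h4 := norm_nonneg (b - x)
      nlinarith
    have hQyx : t ^ 2 - s ^ 2 ≤ C := by
      have h := (hymin b hb).trans hQbx
      rw [Q_eq] at h
      linarith
    have hs1 : s ≤ L' * t + D := by
      have htri : normP l p (y - x) ≤ normP l p (y - b) + normP l p (b - x) := by
        have : y - x = (y - b) + (b - x) := by abel
        rw [this]; exact normP_add_le _ _
      have h1 : normP l p (y - b) ≤ L' * normL l p (y - b) := hlip' y hyX b hb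
      have h2 : normL l p (y - b) ≤ normL l p (y - x) + normL l p (x - b) := by
        have : y - b = (y - x) + (x - b) := by abel
        rw [this]; exact normL_add_le _ _
      have h3 : normL l p (x - b) ≤ K := by
        calc normL l p (x - b) ≤ ‖x - b‖ := normL_le_norm _
          _ = ‖b - x‖ := norm_sub_rev _ _
          _ ≤ K := hbx
      have h4 : normP l p (b - x) ≤ K := (normP_le_norm _).trans hbx
      have h5 : L' * normL l p (y - b) ≤ L' * (t + K) := by
        apply mul_le_mul_of_nonneg_left _ hL'0
        rw [htdef]; linarith
      have h6 : L' * (t + K) ≤ t + K := by nlinarith [normL_nonneg (l := l) (p := p) (y - x)]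
      simp only [hsdef, hDdef]
      nlinarith
    have hD0 : (0:ℝ) ≤ D := by positivity
    have hC0 : (0:ℝ) ≤ C := by positivity
    have htT : t ≤ T := by
      rcases le_or_gt t 1 with h | h
      · exact h.trans hT1
      · have hdenom : 0 < 1 - L' ^ 2 := by nlinarith
        have hss : s * s ≤ (L' * t + D) * (L' * t + D) :=
          mul_le_mul hs1 hs1 hs0 (by positivity)
        have e1 : t ^ 2 ≤ C + (L' * t + D) ^ 2 := by nlinarith
        have e2 : t ^ 2 * (1 - L' ^ 2) ≤ C + 2 * D * t + D ^ 2 := by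
          nlinarith [mul_nonneg (mul_nonneg (sub_nonneg.mpr hL'1.le) hD0) ht0]
        have e3 : (t * (1 - L' ^ 2)) * t ≤ (C + D ^ 2 + 2 * D) * t := by
          nlinarith [mul_nonneg hC0 (by linarith : (0:ℝ) ≤ t - 1),
            mul_nonneg (sq_nonneg D) (by linarith : (0:ℝ) ≤ t - 1)]
        have key : t * (1 - L' ^ 2) ≤ C + D ^ 2 + 2 * D :=
          le_of_mul_le_mul_right e3 (by linarith)
        have : t ≤ (C + D ^ 2 + 2 * D) / (1 - L' ^ 2) := by
          rw [le_div_iff₀ hdenom]; exact key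
        exact this.trans (le_max_right _ _)
    have hsT : s ≤ T + D := by nlinarith [hs1, htT, hL'1.le, ht0, hL'0]
    have hyx : ‖y - x‖ ≤ t + s := by
      have := norm_le_normL_add_normP (l := l) (p := p) (y - x)
      simpa [← htdef, ← hsdef] using this
    have hxnorm : ‖x‖ ≤ ‖a‖ + 1 := by
      have h := norm_add_le (x - a) a
      rw [sub_add_cancel] at h
      linarith
    have hy : ‖y‖ ≤ 2 * T + D + ‖a‖ + 1 := by
      have h := norm_add_le (y - x) x
      rw [sub_add_cancel] at h
      linarith
    rw [Metric.mem_ball, dist_zero_right]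
    linarith
  · -- upper semicontinuity
    intro a x y y₀ htx hy hty
    have hy₀X : y₀ ∈ X := hX.mem_of_tendsto hty (Filter.Eventually.of_forall fun ν => (hy ν).1)
    refine ⟨hy₀X, fun c hc => ?_⟩
    have h1 : Tendsto (fun ν => Q l p (y ν - x ν)) atTop (𝓝 (Q l p (y₀ - a))) :=
      (continuous_Q.tendsto _).comp (hty.sub htx)
    have h2 : Tendsto (fun ν => Q l p (c - x ν)) atTop (𝓝 (Q l p (c - a))) :=
      (continuous_Q.tendsto _).comp (tendsto_const_nhds.sub htx)
    exact le_of_tendsto_of_tendsto' h1 h2 fun ν => (hy ν).2 c hc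
  · -- every point of m(a) is a limit
    intro a y₀ hy₀
    exact ⟨fun _ => a, fun _ => y₀, tendsto_const_nhds, fun _ => hy₀, tendsto_const_nhds⟩
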